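/- For every τ > 0 and x ∈ ℝ, the mixed partial derivative ∂_τ ∂_x v exists at (τ,x) and satisfies the Black–Scholes greek relation ∂_τ ∂_x v(τ,x) = (1/2 − x/τ) · ∂_τ v(τ,x). -/

import Mathlib

open MeasureTheory

/-- Standard normal cumulative distribution function. -/
noncomputable def stdN (y : ℝ) : ℝ :=
  ∫ u in Set.Iio y, Real.exp (-u ^ 2 / 2) / Real.sqrt (2 * Real.pi)

/-- Standard normal density. -/
noncomputable def stdn (y : ℝ) : ℝ :=
  Real.exp (-y ^ 2 / 2) / Real.sqrt (2 * Real.pi)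

/-- Unit-volatility Black–Scholes price in reduced variables. -/
noncomputable def bsv (τ x : ℝ) : ℝ :=
  Real.exp x * stdN (x / Real.sqrt τ + Real.sqrt τ / 2) -
    stdN (x / Real.sqrt τ - Real.sqrt τ / 2)

lemma gauss_integrable :
    Integrable (fun u : ℝ => Real.exp (-u ^ 2 / 2) / Real.sqrt (2 * Real.pi)) := by
  have h := (integrable_exp_neg_mul_sq (by norm_num : (0:ℝ) < 1/2)).mul_const
    (Real.sqrt (2 * Real.pi))⁻¹
  have he : (fun u : ℝ => Real.exp (-u ^ 2 / 2) / Real.sqrt (2 * Real.pi)) =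
      fun u : ℝ => Real.exp (-(1/2) * u ^ 2) * (Real.sqrt (2 * Real.pi))⁻¹ := by
    funext u
    rw [div_eq_mul_inv]
    congr 2
    ring
  rw [he]
  exact h

lemma gauss_continuous :
    Continuous (fun u : ℝ => Real.exp (-u ^ 2 / 2) / Real.sqrt (2 * Real.pi)) := by
  fun_prop

lemma hasDerivAt_stdN (y : ℝ) : HasDerivAt stdN (stdn y) y := by
  set f := fun u : ℝ => Real.exp (-u ^ 2 / 2) / Real.sqrt (2 * Real.pi) with hf
  have hint := gauss_integrable
  have key : ∀ z : ℝ, stdN z = (∫ u in Set.Iic (0:ℝ), f u) + ∫ u in (0:ℝ)..z, f u := by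
    intro z
    have h1 : stdN z = ∫ u in Set.Iic z, f u :=
      setIntegral_congr_set Iio_ae_eq_Iic
    have h2 := intervalIntegral.integral_Iic_sub_Iic (μ := volume)
      hint.integrableOn hint.integrableOn (a := (0:ℝ)) (b := z)
    rw [h1]
    linarith
  have hD : HasDerivAt (fun z => (∫ u in Set.Iic (0:ℝ), f u) + ∫ u in (0:ℝ)..z, f u)
      (f y) y := by
    exact (intervalIntegral.integral_hasDerivAt_right
      (hint.intervalIntegrable)
      (gauss_continuous.stronglyMeasurableAtFilter _ _)
      gauss_continuous.continuousAt).const_add _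
  have : stdN = fun z => (∫ u in Set.Iic (0:ℝ), f u) + ∫ u in (0:ℝ)..z, f u :=
    funext key
  rw [this]
  exact hD

lemma hasDerivAt_stdn (y : ℝ) : HasDerivAt stdn (-y * stdn y) y := by
  have h1 : HasDerivAt (fun y : ℝ => -y ^ 2 / 2) (-y) y := by
    have := ((hasDerivAt_pow 2 y).neg).div_const 2
    refine this.congr_deriv ?_
    simp
    ring
  have h2 := (h1.exp).div_const (Real.sqrt (2 * Real.pi))
  have he : stdn = fun y : ℝ => Real.exp (-y ^ 2 / 2) / Real.sqrt (2 * Real.pi) := rfl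
  rw [he]
  refine h2.congr_deriv ?_
  beta_reduce
  ring

/-- Black–Scholes greek relation `∂_τ ∂_x v(τ,x) = (1/2 − x/τ) ∂_τ v(τ,x)`. -/
theorem bsv_mixed_deriv (τ x : ℝ) (hτ : 0 < τ) :
    ∃ vτ vτx : ℝ,
      HasDerivAt (fun t => bsv t x) vτ τ ∧
      HasDerivAt (fun t => deriv (fun y => bsv t y) x) vτx τ ∧
      vτx = (1 / 2 - x / τ) * vτ := by
  set s := Real.sqrt τ with hs_def
  have hs : 0 < s := Real.sqrt_pos.mpr hτ
  have hs0 : s ≠ 0 := ne_of_gt hs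
  have hs2 : s ^ 2 = τ := Real.sq_sqrt hτ.le
  set Dp : ℝ := x / s + s / 2 with hDp
  set Dm : ℝ := x / s - s / 2 with hDm
  set iv : ℝ := -(1 / (2 * s)) / s ^ 2 with hiv
  set dpv : ℝ := x * iv + 1 / (2 * s) / 2 with hdpv
  set dmv : ℝ := x * iv - 1 / (2 * s) / 2 with hdmv
  -- derivative of sqrt and inverse sqrt
  have hsqrt : HasDerivAt Real.sqrt (1 / (2 * s)) τ := Real.hasDerivAt_sqrt (ne_of_gt hτ)
  have hinv : HasDerivAt (fun t => (Real.sqrt t)⁻¹) iv τ := by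
    have := hsqrt.inv hs0
    exact this
  -- derivative of t ↦ x/√t + √t/2 and t ↦ x/√t - √t/2
  have hxdiv : HasDerivAt (fun t => x / Real.sqrt t) (x * iv) τ := by
    have := hinv.const_mul x
    simpa [div_eq_mul_inv] using this
  have hdpD : HasDerivAt (fun t => x / Real.sqrt t + Real.sqrt t / 2) dpv τ := by
    exact hxdiv.add (hsqrt.div_const 2)
  have hdmD : HasDerivAt (fun t => x / Real.sqrt t - Real.sqrt t / 2) dmv τ := by
    exact hxdiv.sub (hsqrt.div_const 2)
  -- compositions with stdN
  have hNp : HasDerivAt (fun t => stdN (x / Real.sqrt t + Real.sqrt t / 2))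
      (stdn Dp * dpv) τ := by exact (hasDerivAt_stdN Dp).comp τ hdpD
  have hNm : HasDerivAt (fun t => stdN (x / Real.sqrt t - Real.sqrt t / 2))
      (stdn Dm * dmv) τ := by exact (hasDerivAt_stdN Dm).comp τ hdmD
  -- compositions with stdn
  have hnp : HasDerivAt (fun t => stdn (x / Real.sqrt t + Real.sqrt t / 2))
      (-Dp * stdn Dp * dpv) τ := by exact (hasDerivAt_stdn Dp).comp τ hdpD
  have hnm : HasDerivAt (fun t => stdn (x / Real.sqrt t - Real.sqrt t / 2))
      (-Dm * stdn Dm * dmv) τ := by exact (hasDerivAt_stdn Dm).comp τ hdmD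
  -- time derivative of bsv
  have hv : HasDerivAt (fun t => bsv t x)
      (Real.exp x * (stdn Dp * dpv) - stdn Dm * dmv) τ := by
    unfold bsv
    exact (hNp.const_mul (Real.exp x)).sub hNm
  -- the x-derivative function F
  set F : ℝ → ℝ := fun t =>
    Real.exp x * stdN (x / Real.sqrt t + Real.sqrt t / 2) +
      Real.exp x * (stdn (x / Real.sqrt t + Real.sqrt t / 2) * (Real.sqrt t)⁻¹) -
      stdn (x / Real.sqrt t - Real.sqrt t / 2) * (Real.sqrt t)⁻¹ with hF_def
  -- deriv in y equals F t for t > 0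
  have hderiv_eq : ∀ t : ℝ, 0 < t → deriv (fun y => bsv t y) x = F t := by
    intro t ht
    have hst : (0:ℝ) < Real.sqrt t := Real.sqrt_pos.mpr ht
    have hlin : HasDerivAt (fun y : ℝ => y / Real.sqrt t + Real.sqrt t / 2)
        (1 / Real.sqrt t) x := by
      simpa using ((hasDerivAt_id x).div_const (Real.sqrt t)).add_const (Real.sqrt t / 2)
    have hlin' : HasDerivAt (fun y : ℝ => y / Real.sqrt t - Real.sqrt t / 2)
        (1 / Real.sqrt t) x := by
      simpa using ((hasDerivAt_id x).div_const (Real.sqrt t)).sub_const (Real.sqrt t / 2)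
    have hNy : HasDerivAt (fun y : ℝ => stdN (y / Real.sqrt t + Real.sqrt t / 2))
        (stdn (x / Real.sqrt t + Real.sqrt t / 2) * (1 / Real.sqrt t)) x :=
      (hasDerivAt_stdN _).comp x hlin
    have hNy' : HasDerivAt (fun y : ℝ => stdN (y / Real.sqrt t - Real.sqrt t / 2))
        (stdn (x / Real.sqrt t - Real.sqrt t / 2) * (1 / Real.sqrt t)) x :=
      (hasDerivAt_stdN _).comp x hlin'
    have hBy : HasDerivAt (fun y => bsv t y) (F t) x := by
      unfold bsv
      have := ((Real.hasDerivAt_exp x).mul hNy).sub hNy'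
      refine this.congr_deriv ?_
      rw [hF_def]
      ring
    exact hBy.deriv
  -- derivative of F at τ
  have hFp1 : HasDerivAt (fun t => Real.exp x * stdN (x / Real.sqrt t + Real.sqrt t / 2))
      (Real.exp x * (stdn Dp * dpv)) τ := hNp.const_mul _
  have hFp2 : HasDerivAt
      (fun t => Real.exp x * (stdn (x / Real.sqrt t + Real.sqrt t / 2) * (Real.sqrt t)⁻¹))
      (Real.exp x * ((-Dp * stdn Dp * dpv) * s⁻¹ + stdn Dp * iv)) τ := by
    exact (hnp.mul hinv).const_mul _
  have hFp3 : HasDerivAt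
      (fun t => stdn (x / Real.sqrt t - Real.sqrt t / 2) * (Real.sqrt t)⁻¹)
      ((-Dm * stdn Dm * dmv) * s⁻¹ + stdn Dm * iv) τ := hnm.mul hinv
  have hF : HasDerivAt F
      (Real.exp x * (stdn Dp * dpv) +
        Real.exp x * ((-Dp * stdn Dp * dpv) * s⁻¹ + stdn Dp * iv) -
        ((-Dm * stdn Dm * dmv) * s⁻¹ + stdn Dm * iv)) τ := by
    rw [hF_def]
    exact (hFp1.add hFp2).sub hFp3
  -- transfer to the deriv function
  have heq : (fun t => deriv (fun y => bsv t y) x) =ᶠ[nhds τ] F := by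
    filter_upwards [Ioi_mem_nhds hτ] with t ht
    exact hderiv_eq t ht
  have hvx : HasDerivAt (fun t => deriv (fun y => bsv t y) x)
      (Real.exp x * (stdn Dp * dpv) +
        Real.exp x * ((-Dp * stdn Dp * dpv) * s⁻¹ + stdn Dp * iv) -
        ((-Dm * stdn Dm * dmv) * s⁻¹ + stdn Dm * iv)) τ :=
    hF.congr_of_eventuallyEq heq
  -- key Gaussian identity: stdn Dm = exp x * stdn Dp
  have hkey : stdn Dm = Real.exp x * stdn Dp := by
    unfold stdn
    rw [mul_div_assoc', ← Real.exp_add]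
    congr 1
    rw [hDp, hDm]
    field_simp
    ring
  refine ⟨_, _, hv, hvx, ?_⟩
  -- final algebraic identity
  rw [hkey, ← hs2, hdpv, hdmv, hiv, hDp, hDm]
  field_simp
  ring
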